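/- Suppose r* = s* and: (i) p and q have no common real root in S, and (ii) the degree-d homogeneous parts p_d and q_d of p and q have no common nonzero real root in Ŝ = {x ∈ ℝⁿ : ĥᵢ(x) = 0, ĝⱼ(x) ≥ 0}, where ĥᵢ, ĝⱼ are the top-degree homogeneous parts of hᵢ, gⱼ. Then the infimum s* of the homogenized problem min{p̃(x̃) : x̃ ∈ S̃, q̃(x̃) = 1} is attained. -/

import Mathlib

open MvPolynomial Filter Topology

private lemma smul_cons' {n : ℕ} (c a : ℝ) (x : Fin n → ℝ) :
    c • (Fin.cons a x : Fin (n + 1) → ℝ) = Fin.cons (c * a) (c • x) := by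
  funext i
  refine Fin.cases ?_ (fun j => ?_) i <;> simp

private lemma eval_smul_of_isHomogeneous {σ : Type*} {m : ℕ}
    (φ : MvPolynomial σ ℝ) (hφ : φ.IsHomogeneous m) (c : ℝ) (x : σ → ℝ) :
    eval (c • x) φ = c ^ m * eval x φ := by
  rw [eval_eq, eval_eq, Finset.mul_sum]
  apply Finset.sum_congr rfl
  intro s hs
  have hm : (∑ i ∈ s.support, s i) = m := by
    have := hφ (mem_support_iff.mp hs)
    simpa [Finsupp.weight_apply, Finsupp.sum] using this
  rw [← hm]
  simp only [Pi.smul_apply, smul_eq_mul, mul_pow]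
  rw [Finset.prod_mul_distrib, Finset.prod_pow_eq_pow_sum]
  ring

private lemma eval_cons_zero {n d : ℕ} (p : MvPolynomial (Fin n) ℝ)
    (P : MvPolynomial (Fin (n + 1)) ℝ) (hP : P.IsHomogeneous d)
    (hP1 : ∀ x : Fin n → ℝ, eval (Fin.cons 1 x) P = eval x p)
    (hdeg : p.totalDegree ≤ d) (x : Fin n → ℝ) :
    eval (Fin.cons 0 x) P = eval x (homogeneousComponent d p) := by
  set f : ℝ → ℝ := fun t => eval (Fin.cons t x) P with hf
  set g : ℝ → ℝ := fun t =>
    ∑ k ∈ Finset.range (d + 1), t ^ (d - k) * eval x (homogeneousComponent k p) with hg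
  have hpsum : ∀ y : Fin n → ℝ,
      eval y p = ∑ k ∈ Finset.range (d + 1), eval y (homogeneousComponent k p) := by
    intro y
    have h1 : ∑ k ∈ Finset.range (p.totalDegree + 1), eval y (homogeneousComponent k p)
        = eval y p := by
      rw [← map_sum, sum_homogeneousComponent]
    rw [← h1]
    refine Finset.sum_subset (Finset.range_subset_range.2 (by omega)) ?_
    intro k hk hk'
    rw [homogeneousComponent_eq_zero]
    · simp
    · simp only [Finset.mem_range, not_lt] at hk'
      omega
  have key : ∀ t : ℝ, t ≠ 0 → f t = g t := by
    intro t ht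
    have h2 : (Fin.cons t x : Fin (n + 1) → ℝ) = t • (Fin.cons 1 (t⁻¹ • x) : Fin (n + 1) → ℝ) := by
      rw [smul_cons', smul_smul, mul_inv_cancel₀ ht, one_smul, mul_one]
    show eval (Fin.cons t x) P = _
    rw [h2, eval_smul_of_isHomogeneous P hP, hP1, hpsum, Finset.mul_sum]
    apply Finset.sum_congr rfl
    intro k hk
    rw [eval_smul_of_isHomogeneous _ (homogeneousComponent_isHomogeneous k p)]
    have hkd : k ≤ d := Nat.lt_succ_iff.mp (Finset.mem_range.mp hk)
    rw [← mul_assoc]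
    congr 1
    rw [inv_pow]
    exact (pow_sub₀ t ht hkd).symm
  have hfc : Continuous f := by
    apply (MvPolynomial.continuous_eval P).comp
    apply continuous_pi
    intro i
    refine Fin.cases ?_ (fun j => ?_) i
    · simpa using continuous_id'
    · simpa using continuous_const
  have hgc : Continuous g := by
    apply continuous_finset_sum
    intro k _
    exact (continuous_pow _).mul continuous_const
  have hfg : f = g := by
    refine Continuous.ext_on (dense_compl_singleton (0 : ℝ)) hfc hgc ?_
    intro t ht
    exact key t (by simpa using ht)
  have hg0 : g 0 = eval x (homogeneousComponent d p) := by
    show (∑ k ∈ Finset.range (d + 1),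
      (0:ℝ) ^ (d - k) * eval x (homogeneousComponent k p)) = _
    rw [Finset.sum_eq_single d]
    · simp
    · intro k hk hkd
      have : k < d + 1 := Finset.mem_range.mp hk
      have hne : d - k ≠ 0 := by omega
      simp [zero_pow hne]
    · intro hd'
      exact absurd (Finset.self_mem_range_succ d) hd'
  calc eval (Fin.cons 0 x) P = f 0 := rfl
    _ = g 0 := by rw [hfg]
    _ = _ := hg0
/-- if `r* = s* = ρ`, `p` and `q` have no common real root in `S`,
and the degree-`d` homogeneous parts `p_d, q_d` have no common nonzero real root
in `Ŝ` (defined by the top-degree parts of the constraints), then `s*` is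
attained. -/
theorem homogenized_inf_attained_of_no_common_roots
    (n m₁ m₂ : ℕ)
    (p q : MvPolynomial (Fin n) ℝ)
    (h : Fin m₁ → MvPolynomial (Fin n) ℝ) (g : Fin m₂ → MvPolynomial (Fin n) ℝ)
    (d : ℕ) (hd : d = max p.totalDegree q.totalDegree)
    (P Q : MvPolynomial (Fin (n + 1)) ℝ)
    (hP : P.IsHomogeneous d)
    (hP1 : ∀ x : Fin n → ℝ, eval (Fin.cons 1 x) P = eval x p)
    (hQ : Q.IsHomogeneous d)
    (hQ1 : ∀ x : Fin n → ℝ, eval (Fin.cons 1 x) Q = eval x q)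
    (Hh : Fin m₁ → MvPolynomial (Fin (n + 1)) ℝ)
    (Hg : Fin m₂ → MvPolynomial (Fin (n + 1)) ℝ)
    (hHh : ∀ i, (Hh i).IsHomogeneous (h i).totalDegree)
    (hHh1 : ∀ i, ∀ x : Fin n → ℝ, eval (Fin.cons 1 x) (Hh i) = eval x (h i))
    (hHg : ∀ j, (Hg j).IsHomogeneous (g j).totalDegree)
    (hHg1 : ∀ j, ∀ x : Fin n → ℝ, eval (Fin.cons 1 x) (Hg j) = eval x (g j))
    (rfeas : (Fin n → ℝ) → Prop)
    (hrfeas : ∀ x, rfeas x ↔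
      (∀ i, eval x (h i) = 0) ∧ (∀ j, 0 ≤ eval x (g j)) ∧ 0 < eval x q)
    (sfeas : (Fin (n + 1) → ℝ) → Prop)
    (hsfeas : ∀ xt, sfeas xt ↔
      (∀ i, eval xt (Hh i) = 0) ∧ eval xt Q = 1 ∧
        (∀ j, 0 ≤ eval xt (Hg j)) ∧ 0 ≤ xt 0)
    (ρ : ℝ)
    (hr : IsGLB {v : ℝ | ∃ x, rfeas x ∧ v = eval x p / eval x q} ρ)
    (hs : IsGLB {v : ℝ | ∃ xt, sfeas xt ∧ v = eval xt P} ρ)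
    -- (i): no common real root of p and q in S
    (hnoroot : ¬ ∃ x : Fin n → ℝ,
      ((∀ i, eval x (h i) = 0) ∧ (∀ j, 0 ≤ eval x (g j))) ∧
        eval x p = 0 ∧ eval x q = 0)
    -- (ii): no common nonzero real root of p_d and q_d in Ŝ
    (hnoroothat : ¬ ∃ x : Fin n → ℝ, x ≠ 0 ∧
      ((∀ i, eval x (homogeneousComponent (h i).totalDegree (h i)) = 0) ∧
        (∀ j, 0 ≤ eval x (homogeneousComponent (g j).totalDegree (g j)))) ∧
      eval x (homogeneousComponent d p) = 0 ∧
        eval x (homogeneousComponent d q) = 0) :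
    ∃ xt, sfeas xt ∧ eval xt P = ρ := by
  classical
  -- the feasible value set is nonempty
  have hne : {v : ℝ | ∃ xt, sfeas xt ∧ v = eval xt P}.Nonempty := by
    by_contra hcon
    rw [Set.not_nonempty_iff_eq_empty] at hcon
    have h1 : ρ + 1 ≤ ρ := hs.2 (by simp [hcon, lowerBounds])
    linarith
  by_cases hd0 : d = 0
  · -- degree zero: P is constant
    obtain ⟨v, xt₀, hxt₀, hv⟩ := hne
    have hconst : ∀ yt : Fin (n + 1) → ℝ, eval yt P = eval (0 : Fin (n + 1) → ℝ) P := by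
      intro yt
      have h1 := eval_smul_of_isHomogeneous P hP 0 yt
      rw [hd0] at h1
      simpa using h1.symm
    refine ⟨xt₀, hxt₀, ?_⟩
    have hmem : eval xt₀ P ∈ {v : ℝ | ∃ xt, sfeas xt ∧ v = eval xt P} := ⟨xt₀, hxt₀, rfl⟩
    have h1 : ρ ≤ eval xt₀ P := hs.1 hmem
    have h2 : eval xt₀ P ≤ ρ := by
      apply hs.2
      rintro w ⟨yt, hyt, rfl⟩
      rw [hconst yt, ← hconst xt₀]
    linarith
  -- minimizing sequence
  have hseq : ∀ k : ℕ, ∃ xt, sfeas xt ∧ ρ ≤ eval xt P ∧ eval xt P < ρ + 1 / (k + 1) := by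
    intro k
    have hε : (0 : ℝ) < 1 / (k + 1) := by positivity
    obtain ⟨c, ⟨xt, hxt, rfl⟩, hc1, hc2⟩ := hs.exists_between (by linarith : ρ < ρ + 1 / (k + 1))
    exact ⟨xt, hxt, hc1, hc2⟩
  choose u hu₁ hu₂ hu₃ using hseq
  have hPlim : Tendsto (fun k : ℕ => eval (u k) P) atTop (𝓝 ρ) := by
    have hub : Tendsto (fun k : ℕ => ρ + 1 / ((k : ℝ) + 1)) atTop (𝓝 (ρ + 0)) :=
      tendsto_const_nhds.add tendsto_one_div_add_atTop_nhds_zero_nat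
    rw [add_zero] at hub
    exact tendsto_of_tendsto_of_tendsto_of_le_of_le tendsto_const_nhds hub
      (fun k => hu₂ k) (fun k => (hu₃ k).le)
  have hufeas : ∀ k, (∀ i, eval (u k) (Hh i) = 0) ∧ eval (u k) Q = 1 ∧
      (∀ j, 0 ≤ eval (u k) (Hg j)) ∧ 0 ≤ u k 0 := fun k => (hsfeas (u k)).mp (hu₁ k)
  by_cases hbd : ∃ R : ℝ, ∀ k, ‖u k‖ ≤ R
  · -- bounded case: compactness
    obtain ⟨R, hR⟩ := hbd
    have hcp : IsCompact (Metric.closedBall (0 : Fin (n + 1) → ℝ) R) :=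
      isCompact_closedBall _ _
    have hmem : ∀ k, u k ∈ Metric.closedBall (0 : Fin (n + 1) → ℝ) R := fun k => by
      simpa [Metric.mem_closedBall, dist_zero_right] using hR k
    obtain ⟨xt, -, φ, hφ, hlim⟩ := hcp.tendsto_subseq hmem
    have hev : ∀ F : MvPolynomial (Fin (n + 1)) ℝ,
        Tendsto (fun k => eval (u (φ k)) F) atTop (𝓝 (eval xt F)) := fun F =>
      ((MvPolynomial.continuous_eval F).tendsto xt).comp hlim
    refine ⟨xt, (hsfeas xt).mpr ⟨?_, ?_, ?_, ?_⟩, ?_⟩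
    · intro i
      refine tendsto_nhds_unique (hev (Hh i)) ?_
      have : (fun k => eval (u (φ k)) (Hh i)) = fun _ => (0 : ℝ) :=
        funext fun k => by simp only [(hufeas (φ k)).1 i]
      rw [this]; exact tendsto_const_nhds
    · refine tendsto_nhds_unique (hev Q) ?_
      have : (fun k => eval (u (φ k)) Q) = fun _ => (1 : ℝ) :=
        funext fun k => by simp only [(hufeas (φ k)).2.1]
      rw [this]; exact tendsto_const_nhds
    · intro j
      exact ge_of_tendsto' (hev (Hg j)) (fun k => (hufeas (φ k)).2.2.1 j)
    · have hco : Tendsto (fun k => u (φ k) 0) atTop (𝓝 (xt 0)) :=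
        ((continuous_apply (0 : Fin (n + 1))).tendsto xt).comp hlim
      exact ge_of_tendsto' hco (fun k => (hufeas (φ k)).2.2.2)
    · exact tendsto_nhds_unique (hev P) (hPlim.comp hφ.tendsto_atTop)
  · -- unbounded case: derive a contradiction
    exfalso
    push_neg at hbd
    choose c hc using hbd
    set w : ℕ → Fin (n + 1) → ℝ := fun j => u (c j) with hw
    have hwn : ∀ j : ℕ, (j : ℝ) < ‖w j‖ := fun j => hc j
    have htpos : ∀ j : ℕ, 0 < ‖w j‖ := fun j => lt_of_le_of_lt (Nat.cast_nonneg j) (hwn j)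
    set v : ℕ → Fin (n + 1) → ℝ := fun j => ‖w j‖⁻¹ • w j with hv
    have hvmem : ∀ j, v j ∈ Metric.sphere (0 : Fin (n + 1) → ℝ) 1 := by
      intro j
      rw [mem_sphere_zero_iff_norm, hv, norm_smul]
      simp [abs_of_pos (inv_pos.mpr (htpos j)), inv_mul_cancel₀ (ne_of_gt (htpos j))]
    obtain ⟨y, hy, ψ, hψ, hylim⟩ :=
      (isCompact_sphere (0 : Fin (n + 1) → ℝ) 1).tendsto_subseq hvmem
    rw [mem_sphere_zero_iff_norm] at hy
    have hev : ∀ F : MvPolynomial (Fin (n + 1)) ℝ,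
        Tendsto (fun k => eval (v (ψ k)) F) atTop (𝓝 (eval y F)) := fun F =>
      ((MvPolynomial.continuous_eval F).tendsto y).comp hylim
    -- norms tend to infinity
    have htop : Tendsto (fun j : ℕ => ‖w j‖) atTop atTop :=
      tendsto_atTop_mono (fun j => (hwn j).le) tendsto_natCast_atTop_atTop
    have hinv : Tendsto (fun j : ℕ => ‖w j‖⁻¹) atTop (𝓝 0) := htop.inv_tendsto_atTop
    have hinvd : Tendsto (fun j : ℕ => (‖w j‖⁻¹) ^ d) atTop (𝓝 0) := by
      have := hinv.pow d
      rwa [zero_pow hd0] at this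
    -- constraints at the limit
    have hHhy : ∀ i, eval y (Hh i) = 0 := by
      intro i
      refine tendsto_nhds_unique (hev (Hh i)) ?_
      have : (fun k => eval (v (ψ k)) (Hh i)) = fun _ => (0 : ℝ) := by
        funext k
        rw [hv]
        rw [eval_smul_of_isHomogeneous _ (hHh i), (hufeas (c (ψ k))).1 i, mul_zero]
      rw [this]; exact tendsto_const_nhds
    have hHgy : ∀ j, 0 ≤ eval y (Hg j) := by
      intro j
      refine ge_of_tendsto' (hev (Hg j)) ?_
      intro k
      rw [hv, eval_smul_of_isHomogeneous _ (hHg j)]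
      exact mul_nonneg (by positivity) ((hufeas (c (ψ k))).2.2.1 j)
    have hy0 : 0 ≤ y 0 := by
      have hco : Tendsto (fun k => v (ψ k) 0) atTop (𝓝 (y 0)) :=
        ((continuous_apply (0 : Fin (n + 1))).tendsto y).comp hylim
      refine ge_of_tendsto' hco ?_
      intro k
      rw [hv]
      exact mul_nonneg (by positivity) ((hufeas (c (ψ k))).2.2.2)
    have hQy : eval y Q = 0 := by
      refine tendsto_nhds_unique (hev Q) ?_
      have heq : (fun k => eval (v (ψ k)) Q) = fun k => (‖w (ψ k)‖⁻¹) ^ d := by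
        funext k
        rw [hv, eval_smul_of_isHomogeneous _ hQ, (hufeas (c (ψ k))).2.1, mul_one]
      rw [heq]
      exact hinvd.comp hψ.tendsto_atTop
    have hPy : eval y P = 0 := by
      refine tendsto_nhds_unique (hev P) ?_
      have heq : (fun k => eval (v (ψ k)) P)
          = fun k => (‖w (ψ k)‖⁻¹) ^ d * eval (w (ψ k)) P := by
        funext k
        rw [hv, eval_smul_of_isHomogeneous _ hP]
      rw [heq]
      have hb := hinvd.comp hψ.tendsto_atTop
      have hlo : Tendsto (fun k : ℕ => (‖w (ψ k)‖⁻¹) ^ d * ρ) atTop (𝓝 0) := by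
        have := hb.mul_const ρ
        rwa [zero_mul] at this
      have hhi : Tendsto (fun k : ℕ => (‖w (ψ k)‖⁻¹) ^ d * (ρ + 1)) atTop (𝓝 0) := by
        have := hb.mul_const (ρ + 1)
        rwa [zero_mul] at this
      refine tendsto_of_tendsto_of_tendsto_of_le_of_le hlo hhi ?_ ?_
      · intro k
        refine mul_le_mul_of_nonneg_left (hu₂ (c (ψ k))) (by positivity)
      · intro k
        refine mul_le_mul_of_nonneg_left ?_ (by positivity)
        have h1 := hu₃ (c (ψ k))
        have h2 : 1 / ((c (ψ k) : ℝ) + 1) ≤ 1 := by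
          rw [div_le_one (by positivity)]
          simp
        linarith
    -- now the case analysis on y 0
    have hdp : p.totalDegree ≤ d := hd ▸ le_max_left _ _
    have hdq : q.totalDegree ≤ d := hd ▸ le_max_right _ _
    rcases eq_or_lt_of_le hy0 with hy00 | hy0pos
    · -- y 0 = 0 : contradiction with hnoroothat
      have hyc : (Fin.cons 0 (Fin.tail y) : Fin (n + 1) → ℝ) = y := by
        have h1 := Fin.cons_self_tail (α := fun _ => ℝ) y
        rwa [← hy00] at h1
      have hxne : Fin.tail y ≠ 0 := by
        intro h0
        apply_fun norm at hyc
        rw [hy, h0] at hyc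
        have : (Fin.cons 0 (0 : Fin n → ℝ) : Fin (n + 1) → ℝ) = 0 := by
          funext i
          refine Fin.cases ?_ (fun j => ?_) i <;> simp
        rw [this] at hyc
        simp at hyc
      refine hnoroothat ⟨Fin.tail y, hxne, ⟨?_, ?_⟩, ?_, ?_⟩
      · intro i
        rw [← eval_cons_zero (h i) (Hh i) (hHh i) (hHh1 i) le_rfl, hyc]
        exact hHhy i
      · intro j
        rw [← eval_cons_zero (g j) (Hg j) (hHg j) (hHg1 j) le_rfl, hyc]
        exact hHgy j
      · rw [← eval_cons_zero p P hP hP1 hdp, hyc]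
        exact hPy
      · rw [← eval_cons_zero q Q hQ hQ1 hdq, hyc]
        exact hQy
    · -- y 0 > 0 : contradiction with hnoroot
      set x : Fin n → ℝ := (y 0)⁻¹ • Fin.tail y with hx
      have hy0ne : y 0 ≠ 0 := ne_of_gt hy0pos
      have hyx : y = (y 0) • (Fin.cons 1 x : Fin (n + 1) → ℝ) := by
        rw [smul_cons', mul_one, hx, smul_smul, mul_inv_cancel₀ hy0ne, one_smul,
          Fin.cons_self_tail]
      have key : ∀ (m : ℕ) (F : MvPolynomial (Fin (n + 1)) ℝ) (f : MvPolynomial (Fin n) ℝ),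
          F.IsHomogeneous m → (∀ z : Fin n → ℝ, eval (Fin.cons 1 z) F = eval z f) →
          eval y F = (y 0) ^ m * eval x f := by
        intro m F f hF hF1
        calc eval y F = eval ((y 0) • (Fin.cons 1 x : Fin (n + 1) → ℝ)) F := by rw [← hyx]
          _ = (y 0) ^ m * eval (Fin.cons 1 x) F := eval_smul_of_isHomogeneous _ hF _ _
          _ = (y 0) ^ m * eval x f := by rw [hF1]
      refine hnoroot ⟨x, ⟨?_, ?_⟩, ?_, ?_⟩
      · intro i
        have h1 := key _ (Hh i) (h i) (hHh i) (hHh1 i)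
        rw [hHhy i] at h1
        exact (mul_eq_zero.mp h1.symm).resolve_left (pow_ne_zero _ hy0ne)
      · intro j
        have h1 := key _ (Hg j) (g j) (hHg j) (hHg1 j)
        have h2 := hHgy j
        rw [h1] at h2
        exact (mul_nonneg_iff_of_pos_left (pow_pos hy0pos _)).mp h2
      · have h1 := key d P p hP hP1
        rw [hPy] at h1
        exact (mul_eq_zero.mp h1.symm).resolve_left (pow_ne_zero _ hy0ne)
      · have h1 := key d Q q hQ hQ1
        rw [hQy] at h1
        exact (mul_eq_zero.mp h1.symm).resolve_left (pow_ne_zero _ hy0ne)
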